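/- Let g be a finite simple graph, k a natural number, S ⊆ V(g), and let π_1, …, π_c be a partition of V(g)\S into independent sets of g. Then every k-defective clique C of g with S ⊆ C ⊆ V(g) satisfies |C| ≤ |S| + c + k − |Ē(S)|. -/
import Mathlib

open Finset

variable {V : Type*} [Fintype V] [DecidableEq V]

/-- The set of non-edges of `S`: unordered pairs of distinct vertices of `S`
that are not adjacent in `G`. -/
def nonEdges (G : SimpleGraph V) [DecidableRel G.Adj] (S : Finset V) : Finset (Sym2 V) :=
  ((S ×ˢ S).filter fun p => p.1 ≠ p.2 ∧ ¬ G.Adj p.1 p.2).image fun p => s(p.1, p.2)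

lemma mem_nonEdges (G : SimpleGraph V) [DecidableRel G.Adj] (T : Finset V) (x y : V) :
    s(x, y) ∈ nonEdges G T ↔ x ∈ T ∧ y ∈ T ∧ x ≠ y ∧ ¬ G.Adj x y := by
  simp only [nonEdges, mem_image, mem_filter, mem_product, Sym2.eq_iff]
  constructor
  · rintro ⟨⟨a, b⟩, ⟨⟨ha, hb⟩, hne, hadj⟩, h | h⟩
    · obtain ⟨rfl, rfl⟩ := h; exact ⟨ha, hb, hne, hadj⟩
    · obtain ⟨rfl, rfl⟩ := h
      exact ⟨hb, ha, Ne.symm hne, fun h => hadj h.symm⟩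
  · rintro ⟨hx, hy, hne, hadj⟩
    exact ⟨(x, y), ⟨⟨hx, hy⟩, hne, hadj⟩, Or.inl ⟨rfl, rfl⟩⟩

lemma nonEdges_mono (G : SimpleGraph V) [DecidableRel G.Adj] {T U : Finset V} (h : T ⊆ U) :
    nonEdges G T ⊆ nonEdges G U := by
  intro e he
  induction e using Sym2.ind with
  | _ x y =>
    rw [mem_nonEdges] at he ⊢
    exact ⟨h he.1, h he.2.1, he.2.2⟩

lemma indep_nonEdges_lb (G : SimpleGraph V) [DecidableRel G.Adj] {T : Finset V}
    (h : ∀ x ∈ T, ∀ y ∈ T, ¬ G.Adj x y) :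
    (T.card : ℤ) - 1 ≤ ((nonEdges G T).card : ℤ) := by
  rcases T.eq_empty_or_nonempty with rfl | ⟨t, ht⟩
  · simp only [Finset.card_empty]; omega
  · have hinj : ∀ x ∈ T.erase t, s(t, x) ∈ nonEdges G T := by
      intro x hx
      rw [mem_nonEdges]
      exact ⟨ht, T.mem_of_mem_erase hx, Ne.symm (T.ne_of_mem_erase hx),
        h t ht x (T.mem_of_mem_erase hx)⟩
    have hcard : (T.erase t).card ≤ (nonEdges G T).card := by
      apply Finset.card_le_card_of_injOn (fun x => s(t, x)) hinj
      intro a _ b _ hab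
      simpa using (Sym2.eq_iff.mp hab).elim (fun h => h.2)
        (fun h => h.2.trans h.1)
    have := Finset.card_erase_of_mem ht
    omega

/-- If `π 0, …, π (c-1)` is a partition of `V(g) \ S` into independent sets, then every
`k`-defective clique `C` with `S ⊆ C` satisfies `|C| ≤ |S| + c + k − |Ē(S)|`. -/
theorem partition_upper_bound (G : SimpleGraph V) [DecidableRel G.Adj] (k : ℕ)
    (S : Finset V) {c : ℕ} (π : Fin c → Finset V)
    (hdisj : ∀ i j : Fin c, i ≠ j → Disjoint (π i) (π j))
    (hcover : Finset.univ.biUnion π = Finset.univ \ S)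
    (hind : ∀ i : Fin c, ∀ x ∈ π i, ∀ y ∈ π i, ¬ G.Adj x y)
    (C : Finset V) (hSC : S ⊆ C) (hC : (nonEdges G C).card ≤ k) :
    (C.card : ℤ) ≤ (S.card : ℤ) + c + k - ((nonEdges G S).card : ℤ) := by
  classical
  set A : Fin c → Finset (Sym2 V) := fun i => nonEdges G (C ∩ π i) with hA
  have hπS : ∀ i : Fin c, Disjoint (π i) S := by
    intro i
    have : π i ⊆ Finset.univ \ S := by
      rw [← hcover]; exact Finset.subset_biUnion_of_mem π (Finset.mem_univ i)
    exact Finset.disjoint_left.mpr fun x hx => (Finset.mem_sdiff.mp (this hx)).2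
  -- disjointness of the A i's
  have hAdisj : ∀ i j : Fin c, i ≠ j → Disjoint (A i) (A j) := by
    intro i j hij
    rw [Finset.disjoint_left]
    intro e hei hej
    induction e using Sym2.ind with
    | _ x y =>
      rw [hA, mem_nonEdges] at hei hej
      exact Finset.disjoint_left.mp (hdisj i j hij)
        (Finset.mem_of_mem_inter_right hei.1) (Finset.mem_of_mem_inter_right hej.1)
  have hSAdisj : Disjoint (nonEdges G S) (Finset.univ.biUnion A) := by
    rw [Finset.disjoint_left]
    intro e heS heA
    rw [Finset.mem_biUnion] at heA
    obtain ⟨i, _, hei⟩ := heA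
    induction e using Sym2.ind with
    | _ x y =>
      rw [mem_nonEdges] at heS
      rw [hA, mem_nonEdges] at hei
      exact Finset.disjoint_left.mp (hπS i) (Finset.mem_of_mem_inter_right hei.1) heS.1
  -- the union sits inside nonEdges G C
  have hsub : nonEdges G S ∪ Finset.univ.biUnion A ⊆ nonEdges G C := by
    apply Finset.union_subset
    · exact nonEdges_mono G hSC
    · apply Finset.biUnion_subset.mpr
      intro i _
      exact nonEdges_mono G (Finset.inter_subset_left)
  have hcards : (nonEdges G S).card + ∑ i : Fin c, (A i).card ≤ (nonEdges G C).card := by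
    have h1 := Finset.card_le_card hsub
    rw [Finset.card_union_of_disjoint hSAdisj,
      Finset.card_biUnion (fun i _ j _ h => hAdisj i j h)] at h1
    exact h1
  -- each class: card lower bound
  have hlb : ∀ i : Fin c, ((C ∩ π i).card : ℤ) - 1 ≤ ((A i).card : ℤ) := by
    intro i
    apply indep_nonEdges_lb
    intro x hx y hy
    exact hind i x (Finset.mem_of_mem_inter_right hx) y (Finset.mem_of_mem_inter_right hy)
  -- C \ S is partitioned by the C ∩ π i
  have hCS : (C \ S).card = ∑ i : Fin c, (C ∩ π i).card := by
    have : C \ S = Finset.univ.biUnion (fun i => C ∩ π i) := by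
      ext x
      simp only [Finset.mem_sdiff, Finset.mem_biUnion, Finset.mem_inter, Finset.mem_univ,
        true_and]
      constructor
      · rintro ⟨hxC, hxS⟩
        have : x ∈ Finset.univ.biUnion π := by
          rw [hcover]; exact Finset.mem_sdiff.mpr ⟨Finset.mem_univ x, hxS⟩
        obtain ⟨i, _, hi⟩ := Finset.mem_biUnion.mp this
        exact ⟨i, hxC, hi⟩
      · rintro ⟨i, hxC, hxi⟩
        exact ⟨hxC, Finset.disjoint_left.mp (hπS i) hxi⟩
    rw [this]
    exact Finset.card_biUnion fun i _ j _ h =>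
      Finset.disjoint_left.mpr fun x hx hx' =>
        Finset.disjoint_left.mp (hdisj i j h) (Finset.mem_of_mem_inter_right hx)
          (Finset.mem_of_mem_inter_right hx')
  have hle := Finset.card_le_card hSC
  have hCcard : C.card = S.card + (C \ S).card := by
    rw [Finset.card_sdiff_of_subset hSC]; omega
  have hsum : (∑ i : Fin c, ((C ∩ π i).card : ℤ)) - c ≤ ∑ i : Fin c, ((A i).card : ℤ) := by
    have h := Finset.sum_le_sum (fun i (_ : i ∈ Finset.univ) => hlb i)
    rw [Finset.sum_sub_distrib] at h
    simpa [Finset.card_univ] using h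
  have h1 : ((C \ S).card : ℤ) = ∑ i : Fin c, ((C ∩ π i).card : ℤ) := by
    exact_mod_cast congrArg (Nat.cast : ℕ → ℤ) hCS
  have h2 : ((nonEdges G S).card : ℤ) + ∑ i : Fin c, ((A i).card : ℤ)
      ≤ ((nonEdges G C).card : ℤ) := by exact_mod_cast hcards
  have h3 : ((nonEdges G C).card : ℤ) ≤ k := by exact_mod_cast hC
  have h4 : (C.card : ℤ) = S.card + (C \ S).card := by exact_mod_cast hCcard
  linarith
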